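/- Let (X_i,Y_i,R_i), (X_j,Y_j,R_j) be i.i.d. copies of (X,Y,R) with Y ⟂ R | X and positivity. With w(x) = Pr[R=0|X=x]/Pr[R=1|X=x] and for any measurable k(X_i,X_j) ∈ {0,1}, the target AUC E[k(X_i,X_j) | Y_i=1, Y_j=0, R_i=0, R_j=0] equals E[ w(X_i) w(X_j) I(Y_i=1, Y_j=0, R_i=1, R_j=1) k(X_i,X_j) ] / E[ w(X_i) w(X_j) I(Y_i=1, Y_j=0, R_i=1, R_j=1) ], provided the denominator is positive. -/

import Mathlib

open MeasureTheory Real Filter Topology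

section Aux
variable {Ω 𝓧 : Type*} [MeasurableSpace Ω] [MeasurableSpace 𝓧]
  {μ : Measure Ω} [IsProbabilityMeasure μ]

lemma aux_integrable {h : Ω → ℝ} (hm : Measurable h) {C : ℝ} (hb : ∀ ω, |h ω| ≤ C) :
    Integrable h μ :=
  (integrable_const C).mono' hm.aestronglyMeasurable (ae_of_all _ (by simpa using hb))

omit [IsProbabilityMeasure μ] in
lemma aux_scale {X : Ω → 𝓧} {A B : Ω → ℝ}
    (hcond : ∀ f : 𝓧 → ℝ, Measurable f → (∀ x, |f x| ≤ 1) →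
      ∫ ω, f (X ω) * A ω ∂μ = ∫ ω, f (X ω) * B ω ∂μ)
    (f : 𝓧 → ℝ) (hf : Measurable f) (C : ℝ) (hC : 0 < C) (hfC : ∀ x, |f x| ≤ C) :
    ∫ ω, f (X ω) * A ω ∂μ = ∫ ω, f (X ω) * B ω ∂μ := by
  have h := hcond (fun x => f x / C) (hf.div_const C) (fun x => by
    rw [abs_div, abs_of_pos hC, div_le_one hC]; exact hfC x)
  have e : ∀ g : Ω → ℝ, ∫ ω, f (X ω) * g ω ∂μ = C * ∫ ω, f (X ω) / C * g ω ∂μ := by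
    intro g
    rw [← integral_const_mul]
    refine integral_congr_ae (ae_of_all _ fun ω => ?_)
    field_simp
  rw [e A, e B, h]


lemma aux_cond_bounds {X : Ω → 𝓧} (hX : Measurable X) {A Z : Ω → ℝ} {g : 𝓧 → ℝ}
    (hA : Measurable A) (hZ : Measurable Z) (hg : Measurable g)
    (hA0 : ∀ ω, 0 ≤ A ω) (hA1 : ∀ ω, A ω ≤ 1)
    (hZ0 : ∀ ω, 0 ≤ Z ω) (hZ1 : ∀ ω, Z ω ≤ 1)
    (hcond : ∀ f : 𝓧 → ℝ, Measurable f → (∀ x, |f x| ≤ 1) →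
      ∫ ω, f (X ω) * (A ω * Z ω) ∂μ = ∫ ω, f (X ω) * (A ω * g (X ω)) ∂μ) :
    ∀ᵐ ω ∂μ, A ω = 0 ∨ (0 ≤ g (X ω) ∧ g (X ω) ≤ 1) := by
  -- upper bound claims
  have claimU : ∀ n : ℕ, ∀ᵐ ω ∂μ, ¬(0 < A ω ∧ 1 < g (X ω) ∧ g (X ω) ≤ n + 1) := by
    intro n
    set s : Set 𝓧 := {x | 1 < g x ∧ g x ≤ n + 1} with hs
    have hsm : MeasurableSet s := (measurableSet_lt measurable_const hg).inter
      (measurableSet_le hg measurable_const)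
    set f : 𝓧 → ℝ := s.indicator (fun _ => (1:ℝ)) with hfdef
    have hfm : Measurable f := measurable_const.indicator hsm
    have hf01 : ∀ x, 0 ≤ f x ∧ f x ≤ 1 := fun x => by
      by_cases hx : x ∈ s <;> simp [hfdef, hx]
    have hfb : ∀ x, |f x| ≤ 1 := fun x => abs_le.2 ⟨by linarith [(hf01 x).1], (hf01 x).2⟩
    have hfg : ∀ x, |f x * g x| ≤ n + 1 := by
      intro x
      by_cases hx : x ∈ s
      · rw [hfdef, Set.indicator_of_mem hx, one_mul, abs_le]
        rcases hx with ⟨h1, h2⟩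
        constructor <;> [linarith; linarith]
      · simp [hfdef, Set.indicator_of_notMem hx]
        positivity
    have hint1 : Integrable (fun ω => f (X ω) * (A ω * Z ω)) μ := by
      refine aux_integrable (C := 1) ((hfm.comp hX).mul (hA.mul hZ)) (fun ω => ?_)
      rw [abs_mul]
      calc |f (X ω)| * |A ω * Z ω| ≤ 1 * 1 := by
            apply mul_le_mul (hfb _) ?_ (abs_nonneg _) zero_le_one
            rw [abs_mul]
            exact mul_le_one₀ (abs_le.2 ⟨by linarith [hA0 ω], hA1 ω⟩)
              (abs_nonneg _) (abs_le.2 ⟨by linarith [hZ0 ω], hZ1 ω⟩)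
        _ = 1 := one_mul 1
    have hint2 : Integrable (fun ω => f (X ω) * (A ω * g (X ω))) μ := by
      refine aux_integrable (C := n + 1) ((hfm.comp hX).mul (hA.mul (hg.comp hX)))
        (fun ω => ?_)
      have : f (X ω) * (A ω * g (X ω)) = A ω * (f (X ω) * g (X ω)) := by ring
      rw [this, abs_mul]
      calc |A ω| * |f (X ω) * g (X ω)| ≤ 1 * (n + 1) := by
            apply mul_le_mul (abs_le.2 ⟨by linarith [hA0 ω], hA1 ω⟩) (hfg _)
              (abs_nonneg _) zero_le_one
        _ = n + 1 := one_mul _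
    have hzero : ∫ ω, (f (X ω) * (A ω * g (X ω)) - f (X ω) * (A ω * Z ω)) ∂μ = 0 := by
      rw [integral_sub hint2 hint1, hcond f hfm hfb, sub_self]
    have hnn : ∀ ω, 0 ≤ f (X ω) * (A ω * g (X ω)) - f (X ω) * (A ω * Z ω) := by
      intro ω
      have : f (X ω) * (A ω * g (X ω)) - f (X ω) * (A ω * Z ω)
          = f (X ω) * A ω * (g (X ω) - Z ω) := by ring
      rw [this]
      by_cases hx : X ω ∈ s
      · rw [hfdef, Set.indicator_of_mem hx, one_mul]
        exact mul_nonneg (hA0 ω) (by rcases hx with ⟨h1, _⟩; linarith [hZ1 ω])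
      · rw [hfdef, Set.indicator_of_notMem hx]; simp
    have hae : ∀ᵐ ω ∂μ, f (X ω) * (A ω * g (X ω)) - f (X ω) * (A ω * Z ω) = 0 :=
      (integral_eq_zero_iff_of_nonneg hnn (hint2.sub hint1)).1 hzero
    filter_upwards [hae] with ω hω
    rintro ⟨hA', hg1, hg2⟩
    have hxs : X ω ∈ s := ⟨hg1, hg2⟩
    rw [show f (X ω) * (A ω * g (X ω)) - f (X ω) * (A ω * Z ω)
        = f (X ω) * A ω * (g (X ω) - Z ω) from by ring, hfdef,
      Set.indicator_of_mem hxs, one_mul] at hω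
    have : 0 < A ω * (g (X ω) - Z ω) := mul_pos hA' (by linarith [hZ1 ω])
    exact absurd hω this.ne'
  -- lower bound claims
  have claimL : ∀ n : ℕ, ∀ᵐ ω ∂μ, ¬(0 < A ω ∧ g (X ω) < 0 ∧ -(n + 1) ≤ g (X ω)) := by
    intro n
    set s : Set 𝓧 := {x | g x < 0 ∧ -(n + 1) ≤ g x} with hs
    have hsm : MeasurableSet s := (measurableSet_lt hg measurable_const).inter
      (measurableSet_le measurable_const hg)
    set f : 𝓧 → ℝ := s.indicator (fun _ => (1:ℝ)) with hfdef
    have hfm : Measurable f := measurable_const.indicator hsm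
    have hf01 : ∀ x, 0 ≤ f x ∧ f x ≤ 1 := fun x => by
      by_cases hx : x ∈ s <;> simp [hfdef, hx]
    have hfb : ∀ x, |f x| ≤ 1 := fun x => abs_le.2 ⟨by linarith [(hf01 x).1], (hf01 x).2⟩
    have hfg : ∀ x, |f x * g x| ≤ n + 1 := by
      intro x
      by_cases hx : x ∈ s
      · rw [hfdef, Set.indicator_of_mem hx, one_mul, abs_le]
        rcases hx with ⟨h1, h2⟩
        constructor <;> [linarith; linarith]
      · simp [hfdef, Set.indicator_of_notMem hx]
        positivity
    have hint1 : Integrable (fun ω => f (X ω) * (A ω * Z ω)) μ := by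
      refine aux_integrable (C := 1) ((hfm.comp hX).mul (hA.mul hZ)) (fun ω => ?_)
      rw [abs_mul]
      calc |f (X ω)| * |A ω * Z ω| ≤ 1 * 1 := by
            apply mul_le_mul (hfb _) ?_ (abs_nonneg _) zero_le_one
            rw [abs_mul]
            exact mul_le_one₀ (abs_le.2 ⟨by linarith [hA0 ω], hA1 ω⟩)
              (abs_nonneg _) (abs_le.2 ⟨by linarith [hZ0 ω], hZ1 ω⟩)
        _ = 1 := one_mul 1
    have hint2 : Integrable (fun ω => f (X ω) * (A ω * g (X ω))) μ := by
      refine aux_integrable (C := n + 1) ((hfm.comp hX).mul (hA.mul (hg.comp hX)))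
        (fun ω => ?_)
      have : f (X ω) * (A ω * g (X ω)) = A ω * (f (X ω) * g (X ω)) := by ring
      rw [this, abs_mul]
      calc |A ω| * |f (X ω) * g (X ω)| ≤ 1 * (n + 1) := by
            apply mul_le_mul (abs_le.2 ⟨by linarith [hA0 ω], hA1 ω⟩) (hfg _)
              (abs_nonneg _) zero_le_one
        _ = n + 1 := one_mul _
    have hzero : ∫ ω, (f (X ω) * (A ω * Z ω) - f (X ω) * (A ω * g (X ω))) ∂μ = 0 := by
      rw [integral_sub hint1 hint2, hcond f hfm hfb, sub_self]
    have hnn : ∀ ω, 0 ≤ f (X ω) * (A ω * Z ω) - f (X ω) * (A ω * g (X ω)) := by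
      intro ω
      have : f (X ω) * (A ω * Z ω) - f (X ω) * (A ω * g (X ω))
          = f (X ω) * A ω * (Z ω - g (X ω)) := by ring
      rw [this]
      by_cases hx : X ω ∈ s
      · rw [hfdef, Set.indicator_of_mem hx, one_mul]
        exact mul_nonneg (hA0 ω) (by rcases hx with ⟨h1, _⟩; linarith [hZ0 ω])
      · rw [hfdef, Set.indicator_of_notMem hx]; simp
    have hae : ∀ᵐ ω ∂μ, f (X ω) * (A ω * Z ω) - f (X ω) * (A ω * g (X ω)) = 0 :=
      (integral_eq_zero_iff_of_nonneg hnn (hint1.sub hint2)).1 hzero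
    filter_upwards [hae] with ω hω
    rintro ⟨hA', hg1, hg2⟩
    have hxs : X ω ∈ s := ⟨hg1, hg2⟩
    rw [show f (X ω) * (A ω * Z ω) - f (X ω) * (A ω * g (X ω))
        = f (X ω) * A ω * (Z ω - g (X ω)) from by ring, hfdef,
      Set.indicator_of_mem hxs, one_mul] at hω
    have : 0 < A ω * (Z ω - g (X ω)) := mul_pos hA' (by linarith [hZ0 ω])
    exact absurd hω this.ne'
  filter_upwards [ae_all_iff.mpr claimU, ae_all_iff.mpr claimL] with ω hU hL
  rcases eq_or_lt_of_le (hA0 ω) with hA'|hA'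
  · exact Or.inl hA'.symm
  refine Or.inr ⟨?_, ?_⟩
  · by_contra hneg
    push_neg at hneg
    obtain ⟨n, hn⟩ := exists_nat_ge (-g (X ω))
    exact hL n ⟨hA', hneg, by push_cast; linarith⟩
  · by_contra hgt
    push_neg at hgt
    obtain ⟨n, hn⟩ := exists_nat_ge (g (X ω))
    exact hU n ⟨hA', hgt, by push_cast; linarith⟩

end Aux

/-- Inverse-odds weighting identifiability of the AUC in the target
population.  Two i.i.d. copies of `(X, Y, R)` are modeled via iterated integrals with
respect to the same probability measure `μ`.  With `w(x) = Pr[R=0|X=x]/Pr[R=1|X=x]`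
(where `p` is a version of `Pr[R=1|X]`), under conditional exchangeability `Y ⟂ R | X` and
positivity, provided the denominator is positive,
`E[k(X_i,X_j) | Y_i=1, Y_j=0, R_i=0, R_j=0]` equals
`E[w(X_i) w(X_j) I(Y_i=1, Y_j=0, R_i=1, R_j=1) k(X_i,X_j)]`
divided by `E[w(X_i) w(X_j) I(Y_i=1, Y_j=0, R_i=1, R_j=1)]`. -/
theorem auc_weighting_identification
    {Ω 𝓧 : Type*} [MeasurableSpace Ω] [MeasurableSpace 𝓧]
    (μ : Measure Ω) [IsProbabilityMeasure μ]
    (X : Ω → 𝓧) (Y R : Ω → ℝ) (m p : 𝓧 → ℝ) (k : 𝓧 → 𝓧 → ℝ)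
    (hX : Measurable X) (hY : Measurable Y) (hR : Measurable R)
    (hm : Measurable m) (hp : Measurable p) (hk : Measurable (Function.uncurry k))
    (hYbin : ∀ ω, Y ω = 0 ∨ Y ω = 1) (hRbin : ∀ ω, R ω = 0 ∨ R ω = 1)
    (hkbin : ∀ x x', k x x' = 0 ∨ k x x' = 1)
    -- `m` is a version of `Pr[Y=1 | X, R=1]`
    (hm_cond : ∀ f : 𝓧 → ℝ, Measurable f → (∀ x, |f x| ≤ 1) →
      ∫ ω, f (X ω) * R ω * Y ω ∂μ = ∫ ω, f (X ω) * R ω * m (X ω) ∂μ)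
    -- conditional exchangeability `Y ⟂ R | X`
    (hexch : ∀ f : 𝓧 → ℝ, Measurable f → (∀ x, |f x| ≤ 1) →
      ∫ ω, f (X ω) * (1 - R ω) * Y ω ∂μ = ∫ ω, f (X ω) * (1 - R ω) * m (X ω) ∂μ)
    -- `p` is a version of `Pr[R=1 | X]`
    (hp_cond : ∀ f : 𝓧 → ℝ, Measurable f → (∀ x, |f x| ≤ 1) →
      ∫ ω, f (X ω) * R ω ∂μ = ∫ ω, f (X ω) * p (X ω) ∂μ)
    -- positivity
    (hpos : ∀ᵐ ω ∂μ, 0 < 1 - p (X ω) → 0 < p (X ω))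
    -- the denominator of the weighting representation is positive
    (hden : 0 < ∫ ω, ∫ ω', ((1 - p (X ω)) / p (X ω)) * ((1 - p (X ω')) / p (X ω'))
        * Y ω * (1 - Y ω') * R ω * R ω' ∂μ ∂μ) :
    (∫ ω, ∫ ω', (1 - R ω) * (1 - R ω') * Y ω * (1 - Y ω') * k (X ω) (X ω') ∂μ ∂μ)
        / (∫ ω, ∫ ω', (1 - R ω) * (1 - R ω') * Y ω * (1 - Y ω') ∂μ ∂μ)
      = (∫ ω, ∫ ω', ((1 - p (X ω)) / p (X ω)) * ((1 - p (X ω')) / p (X ω'))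
            * Y ω * (1 - Y ω') * R ω * R ω' * k (X ω) (X ω') ∂μ ∂μ)
        / (∫ ω, ∫ ω', ((1 - p (X ω)) / p (X ω)) * ((1 - p (X ω')) / p (X ω'))
            * Y ω * (1 - Y ω') * R ω * R ω' ∂μ ∂μ) := by
  -- pointwise bounds
  have hY0 : ∀ ω, 0 ≤ Y ω := fun ω => by rcases hYbin ω with h|h <;> simp [h]
  have hY1 : ∀ ω, Y ω ≤ 1 := fun ω => by rcases hYbin ω with h|h <;> simp [h]
  have hR0 : ∀ ω, 0 ≤ R ω := fun ω => by rcases hRbin ω with h|h <;> simp [h]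
  have hR1 : ∀ ω, R ω ≤ 1 := fun ω => by rcases hRbin ω with h|h <;> simp [h]
  have hk0 : ∀ x x', 0 ≤ k x x' := fun x x' => by rcases hkbin x x' with h|h <;> simp [h]
  have hk1 : ∀ x x', k x x' ≤ 1 := fun x x' => by rcases hkbin x x' with h|h <;> simp [h]
  -- a.e. bounds for p
  have hp01 : ∀ᵐ ω ∂μ, 0 ≤ p (X ω) ∧ p (X ω) ≤ 1 := by
    have := aux_cond_bounds (μ := μ) hX (A := fun _ => (1:ℝ)) (Z := R) (g := p)
      measurable_const hR hp (fun _ => zero_le_one) (fun _ => le_refl 1) hR0 hR1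
      (fun f hf hf1 => by simpa using hp_cond f hf hf1)
    filter_upwards [this] with ω h
    rcases h with h|h
    · exact absurd h one_ne_zero
    · exact h
  have hm01 : ∀ᵐ ω ∂μ, 0 ≤ m (X ω) ∧ m (X ω) ≤ 1 := by
    have h1 := aux_cond_bounds (μ := μ) hX (A := R) (Z := Y) (g := m)
      hR hY hm hR0 hR1 hY0 hY1
      (fun f hf hf1 => by simpa [mul_assoc] using hm_cond f hf hf1)
    have h2 := aux_cond_bounds (μ := μ) hX (A := fun ω => 1 - R ω) (Z := Y) (g := m)
      (measurable_const.sub hR) hY hm (fun ω => show (0:ℝ) ≤ 1 - R ω by linarith [hR1 ω])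
      (fun ω => show 1 - R ω ≤ (1:ℝ) by linarith [hR0 ω]) hY0 hY1
      (fun f hf hf1 => by simpa [mul_assoc] using hexch f hf hf1)
    filter_upwards [h1, h2] with ω u1 u2
    rcases hRbin ω with h|h
    · rcases u2 with u2|u2
      · rw [h] at u2; norm_num at u2
      · exact u2
    · rcases u1 with u1|u1
      · rw [h] at u1; norm_num at u1
      · exact u1
  have hppos : ∀ᵐ ω ∂μ, 0 < p (X ω) := by
    filter_upwards [hpos] with ω h
    rcases lt_or_ge 0 (1 - p (X ω)) with h'|h'
    · exact h h'
    · linarith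
  -- clamped versions
  set p' : 𝓧 → ℝ := fun x => max 0 (min (p x) 1) with hp'def
  set m' : 𝓧 → ℝ := fun x => max 0 (min (m x) 1) with hm'def
  set q : 𝓧 → ℝ := fun x => (1 - p' x) / p' x with hqdef
  set qn : ℕ → 𝓧 → ℝ := fun n x => min (q x) n with hqndef
  have hp'm : Measurable p' := measurable_const.max (hp.min measurable_const)
  have hm'm : Measurable m' := measurable_const.max (hm.min measurable_const)
  have hqm : Measurable q := (measurable_const.sub hp'm).div hp'm
  have hqnm : ∀ n, Measurable (qn n) := fun n => hqm.min measurable_const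
  have hp'0 : ∀ x, 0 ≤ p' x := fun x => le_max_left _ _
  have hp'1 : ∀ x, p' x ≤ 1 := fun x => max_le zero_le_one (min_le_right _ _)
  have hm'0 : ∀ x, 0 ≤ m' x := fun x => le_max_left _ _
  have hm'1 : ∀ x, m' x ≤ 1 := fun x => max_le zero_le_one (min_le_right _ _)
  have hq0 : ∀ x, 0 ≤ q x := fun x => div_nonneg (by linarith [hp'1 x]) (hp'0 x)
  have hqn0 : ∀ n x, 0 ≤ qn n x := fun n x => le_min (hq0 x) (Nat.cast_nonneg n)
  have hqnq : ∀ n x, qn n x ≤ q x := fun n x => min_le_left _ _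
  have hqnn : ∀ n x, qn n x ≤ n := fun n x => min_le_right _ _
  have hqnmono : ∀ x, Monotone fun n : ℕ => qn n x := fun x n n' h =>
    min_le_min le_rfl (Nat.cast_le.2 h)
  have hqntend : ∀ x, Tendsto (fun n : ℕ => qn n x) atTop (𝓝 (q x)) := by
    intro x
    have h : ∀ᶠ n : ℕ in atTop, qn n x = q x := by
      rw [eventually_atTop]
      exact ⟨⌈q x⌉₊, fun n hn => min_eq_left ((Nat.le_ceil _).trans (Nat.cast_le.2 hn))⟩
    exact Tendsto.congr' (by filter_upwards [h] with n hn; rw [hn]) tendsto_const_nhds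
  have hqnp' : ∀ n x, qn n x * p' x ≤ 1 - p' x := by
    intro n x
    rcases eq_or_lt_of_le (hp'0 x) with h|h
    · rw [← h, mul_zero]; linarith [hp'1 x]
    · calc qn n x * p' x ≤ q x * p' x :=
            mul_le_mul_of_nonneg_right (hqnq n x) (le_of_lt h)
        _ = 1 - p' x := div_mul_cancel₀ _ (ne_of_gt h)
  -- a.e. identification of clamps
  have hpp' : ∀ᵐ ω ∂μ, p' (X ω) = p (X ω) := by
    filter_upwards [hp01] with ω h
    rw [hp'def]; simp only
    rw [min_eq_left h.2, max_eq_right h.1]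
  have hmm' : ∀ᵐ ω ∂μ, m' (X ω) = m (X ω) := by
    filter_upwards [hm01] with ω h
    rw [hm'def]; simp only
    rw [min_eq_left h.2, max_eq_right h.1]
  have hp'pos : ∀ᵐ ω ∂μ, 0 < p' (X ω) := by
    filter_upwards [hppos, hpp'] with ω h1 h2
    rw [h2]; exact h1
  -- extended conditional hypotheses with clamped functions
  have hp_cond' : ∀ f : 𝓧 → ℝ, Measurable f → ∀ C : ℝ, 0 < C → (∀ x, |f x| ≤ C) →
      ∫ ω, f (X ω) * R ω ∂μ = ∫ ω, f (X ω) * p' (X ω) ∂μ := by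
    intro f hf C hC hfC
    rw [aux_scale (A := R) (B := fun ω => p (X ω)) hp_cond f hf C hC hfC]
    exact integral_congr_ae (by filter_upwards [hpp'] with ω h; rw [h])
  have hm_cond' : ∀ f : 𝓧 → ℝ, Measurable f → ∀ C : ℝ, 0 < C → (∀ x, |f x| ≤ C) →
      ∫ ω, f (X ω) * (R ω * Y ω) ∂μ = ∫ ω, f (X ω) * (R ω * m' (X ω)) ∂μ := by
    have base : ∀ f : 𝓧 → ℝ, Measurable f → (∀ x, |f x| ≤ 1) →
        ∫ ω, f (X ω) * (R ω * Y ω) ∂μ = ∫ ω, f (X ω) * (R ω * m' (X ω)) ∂μ := by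
      intro f hf hf1
      have h1 := hm_cond f hf hf1
      simp only [← mul_assoc]
      rw [h1]
      exact integral_congr_ae (by filter_upwards [hmm'] with ω h; rw [h])
    intro f hf C hC hfC
    exact aux_scale (A := fun ω => R ω * Y ω) (B := fun ω => R ω * m' (X ω))
      base f hf C hC hfC
  have hexch' : ∀ f : 𝓧 → ℝ, Measurable f → ∀ C : ℝ, 0 < C → (∀ x, |f x| ≤ C) →
      ∫ ω, f (X ω) * ((1 - R ω) * Y ω) ∂μ = ∫ ω, f (X ω) * ((1 - R ω) * m' (X ω)) ∂μ := by
    have base : ∀ f : 𝓧 → ℝ, Measurable f → (∀ x, |f x| ≤ 1) →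
        ∫ ω, f (X ω) * ((1 - R ω) * Y ω) ∂μ = ∫ ω, f (X ω) * ((1 - R ω) * m' (X ω)) ∂μ := by
      intro f hf hf1
      have h1 := hexch f hf hf1
      simp only [← mul_assoc]
      rw [h1]
      exact integral_congr_ae (by filter_upwards [hmm'] with ω h; rw [h])
    intro f hf C hC hfC
    exact aux_scale (A := fun ω => (1 - R ω) * Y ω) (B := fun ω => (1 - R ω) * m' (X ω))
      base f hf C hC hfC
  -- integrability of the weight times R
  have hFnint : ∀ n : ℕ, Integrable (fun ω => qn n (X ω) * R ω) μ := by
    intro n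
    refine aux_integrable (C := n) (((hqnm n).comp hX).mul hR) (fun ω => ?_)
    rw [abs_mul, abs_of_nonneg (hqn0 n _), abs_of_nonneg (hR0 ω)]
    calc qn n (X ω) * R ω ≤ n * 1 :=
          mul_le_mul (hqnn n _) (hR1 ω) (hR0 ω) (Nat.cast_nonneg n)
      _ = n := mul_one _
  have hFnval : ∀ n : ℕ, ∫ ω, qn n (X ω) * R ω ∂μ ≤ 1 := by
    intro n
    rw [hp_cond' (qn n) (hqnm n) (n + 1) (by positivity)
      (fun x => by rw [abs_of_nonneg (hqn0 n x)]; linarith [hqnn n x])]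
    calc ∫ ω, qn n (X ω) * p' (X ω) ∂μ ≤ ∫ ω, (1 : ℝ) ∂μ := by
          refine integral_mono ?_ (integrable_const 1) (fun ω => ?_)
          · refine aux_integrable (C := n) (((hqnm n).comp hX).mul (hp'm.comp hX))
              (fun ω => ?_)
            rw [abs_mul, abs_of_nonneg (hqn0 n _), abs_of_nonneg (hp'0 _)]
            calc qn n (X ω) * p' (X ω) ≤ n * 1 :=
                  mul_le_mul (hqnn n _) (hp'1 _) (hp'0 _) (Nat.cast_nonneg n)
              _ = n := mul_one _
          · calc qn n (X ω) * p' (X ω) ≤ 1 - p' (X ω) := hqnp' n _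
              _ ≤ 1 := by linarith [hp'0 (X ω)]
      _ = 1 := by simp
  have hqRmeas : Measurable fun ω => q (X ω) * R ω := (hqm.comp hX).mul hR
  have hqR0 : ∀ ω, 0 ≤ q (X ω) * R ω := fun ω => mul_nonneg (hq0 _) (hR0 ω)
  have hqRmono : ∀ ω, Monotone fun n : ℕ => qn n (X ω) * R ω := fun ω n n' h =>
    mul_le_mul_of_nonneg_right (hqnmono (X ω) h) (hR0 ω)
  have hqRtend : ∀ ω, Tendsto (fun n : ℕ => qn n (X ω) * R ω) atTop
      (𝓝 (q (X ω) * R ω)) := fun ω => (hqntend (X ω)).mul_const _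
  have hqRint : Integrable (fun ω => q (X ω) * R ω) μ := by
    have hlim : Tendsto (fun n : ℕ => ∫⁻ ω, ENNReal.ofReal (qn n (X ω) * R ω) ∂μ)
        atTop (𝓝 (∫⁻ ω, ENNReal.ofReal (q (X ω) * R ω) ∂μ)) := by
      refine lintegral_tendsto_of_tendsto_of_monotone
        (fun n => (((hqnm n).comp hX).mul hR).aemeasurable.ennreal_ofReal)
        (ae_of_all _ fun ω n n' h => ENNReal.ofReal_le_ofReal (hqRmono ω h))
        (ae_of_all _ fun ω => (ENNReal.continuous_ofReal.tendsto _).comp (hqRtend ω))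
    have hbd : ∀ n : ℕ, ∫⁻ ω, ENNReal.ofReal (qn n (X ω) * R ω) ∂μ ≤ 1 := by
      intro n
      rw [← ofReal_integral_eq_lintegral_ofReal (hFnint n)
        (ae_of_all _ fun ω => mul_nonneg (hqn0 n _) (hR0 ω))]
      calc ENNReal.ofReal (∫ ω, qn n (X ω) * R ω ∂μ) ≤ ENNReal.ofReal 1 :=
            ENNReal.ofReal_le_ofReal (hFnval n)
        _ = 1 := ENNReal.ofReal_one
    have hfin : ∫⁻ ω, ENNReal.ofReal (q (X ω) * R ω) ∂μ ≤ 1 :=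
      le_of_tendsto' hlim hbd
    exact ⟨hqRmeas.aestronglyMeasurable,
      (hasFiniteIntegral_iff_ofReal (ae_of_all _ hqR0)).2
        (lt_of_le_of_lt hfin ENNReal.one_lt_top)⟩
  have hqRle : ∫ ω, q (X ω) * R ω ∂μ ≤ 1 := by
    have := integral_tendsto_of_tendsto_of_monotone hFnint hqRint
      (ae_of_all _ hqRmono) (ae_of_all _ hqRtend)
    exact le_of_tendsto' this hFnval
  -- core weighting identity
  have core : ∀ (Z : Ω → ℝ) (m₀ : 𝓧 → ℝ), Measurable Z → (∀ ω, 0 ≤ Z ω) → (∀ ω, Z ω ≤ 1) →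
      Measurable m₀ → (∀ x, 0 ≤ m₀ x) → (∀ x, m₀ x ≤ 1) →
      (∀ f : 𝓧 → ℝ, Measurable f → ∀ C : ℝ, 0 < C → (∀ x, |f x| ≤ C) →
        ∫ ω, f (X ω) * (R ω * Z ω) ∂μ = ∫ ω, f (X ω) * (R ω * m₀ (X ω)) ∂μ) →
      (∀ f : 𝓧 → ℝ, Measurable f → (∀ x, |f x| ≤ 1) →
        ∫ ω, f (X ω) * ((1 - R ω) * Z ω) ∂μ
          = ∫ ω, f (X ω) * ((1 - R ω) * m₀ (X ω)) ∂μ) →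
      ∀ f : 𝓧 → ℝ, Measurable f → (∀ x, |f x| ≤ 1) →
        ∫ ω, f (X ω) * ((1 - R ω) * Z ω) ∂μ
          = ∫ ω, f (X ω) * (q (X ω) * (R ω * Z ω)) ∂μ := by
    intro Z m₀ hZm hZ0 hZ1 hm₀m hm₀0 hm₀1 HZ2 HZ1 f hf hf1
    have bqn : ∀ n : ℕ, ∀ x, |f x * qn n x| ≤ n + 1 := by
      intro n x
      rw [abs_mul]
      calc |f x| * |qn n x| ≤ 1 * n := by
            refine mul_le_mul (hf1 x) ?_ (abs_nonneg _) zero_le_one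
            rw [abs_of_nonneg (hqn0 n x)]; exact hqnn n x
        _ ≤ n + 1 := by linarith
    have bqnm : ∀ n : ℕ, ∀ x, |f x * qn n x * m₀ x| ≤ n + 1 := by
      intro n x
      rw [abs_mul]
      calc |f x * qn n x| * |m₀ x| ≤ (n + 1) * 1 := by
            refine mul_le_mul (bqn n x) ?_ (abs_nonneg _) (by positivity)
            rw [abs_of_nonneg (hm₀0 x)]; exact hm₀1 x
        _ = n + 1 := mul_one _
    have bfm : ∀ x, |f x * m₀ x| ≤ 1 := by
      intro x
      rw [abs_mul]
      exact mul_le_one₀ (hf1 x) (abs_nonneg _)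
        (abs_le.2 ⟨by linarith [hm₀0 x], hm₀1 x⟩)
    have key1 : ∀ n : ℕ, (∫ ω, f (X ω) * qn n (X ω) * (R ω * Z ω) ∂μ)
        = ∫ ω, f (X ω) * m₀ (X ω) * (qn n (X ω) * p' (X ω)) ∂μ := by
      intro n
      have e1 : ∫ ω, f (X ω) * qn n (X ω) * (R ω * Z ω) ∂μ
          = ∫ ω, (fun x => f x * qn n x) (X ω) * (R ω * Z ω) ∂μ := rfl
      rw [e1, HZ2 (fun x => f x * qn n x) (hf.mul (hqnm n)) (n + 1) (by positivity) (bqn n)]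
      have e2 : ∫ ω, (fun x => f x * qn n x) (X ω) * (R ω * m₀ (X ω)) ∂μ
          = ∫ ω, (fun x => f x * qn n x * m₀ x) (X ω) * R ω ∂μ :=
        integral_congr_ae (ae_of_all _ fun ω => by simp only []; ring)
      rw [e2, hp_cond' (fun x => f x * qn n x * m₀ x) ((hf.mul (hqnm n)).mul hm₀m) (n + 1) (by positivity) (bqnm n)]
      exact integral_congr_ae (ae_of_all _ fun ω => by simp only []; ring)
    have key2 : Tendsto (fun n : ℕ => ∫ ω, f (X ω) * m₀ (X ω) * (qn n (X ω) * p' (X ω)) ∂μ)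
        atTop (𝓝 (∫ ω, f (X ω) * m₀ (X ω) * (1 - p' (X ω)) ∂μ)) := by
      refine tendsto_integral_of_dominated_convergence (bound := fun _ => (1:ℝ))
        ?_ (integrable_const 1) ?_ ?_
      · intro n
        exact (((hf.comp hX).mul (hm₀m.comp hX)).mul
          (((hqnm n).comp hX).mul (hp'm.comp hX))).aestronglyMeasurable
      · intro n
        refine ae_of_all _ fun ω => ?_
        simp only [Real.norm_eq_abs]
        rw [abs_mul]
        refine mul_le_one₀ (bfm (X ω)) (abs_nonneg _) ?_
        rw [abs_of_nonneg (mul_nonneg (hqn0 n _) (hp'0 _))]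
        calc qn n (X ω) * p' (X ω) ≤ 1 - p' (X ω) := hqnp' n _
          _ ≤ 1 := by linarith [hp'0 (X ω)]
      · filter_upwards [hp'pos] with ω hω
        have h1 : Tendsto (fun n : ℕ => qn n (X ω) * p' (X ω)) atTop
            (𝓝 (q (X ω) * p' (X ω))) := (hqntend _).mul_const _
        rw [show q (X ω) * p' (X ω) = 1 - p' (X ω) from div_mul_cancel₀ _ (ne_of_gt hω)] at h1
        exact h1.const_mul (f (X ω) * m₀ (X ω))
    have key3 : ∫ ω, f (X ω) * m₀ (X ω) * (1 - p' (X ω)) ∂μ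
        = ∫ ω, f (X ω) * ((1 - R ω) * Z ω) ∂μ := by
      have i1 : Integrable (fun ω => f (X ω) * m₀ (X ω)) μ :=
        aux_integrable ((hf.comp hX).mul (hm₀m.comp hX)) (fun ω => bfm _)
      have i2 : Integrable (fun ω => f (X ω) * m₀ (X ω) * p' (X ω)) μ := by
        refine aux_integrable (C := 1)
          (((hf.comp hX).mul (hm₀m.comp hX)).mul (hp'm.comp hX)) (fun ω => ?_)
        rw [abs_mul]
        exact mul_le_one₀ (bfm _) (abs_nonneg _)
          (abs_le.2 ⟨by linarith [hp'0 (X ω)], hp'1 _⟩)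
      have i3 : Integrable (fun ω => f (X ω) * m₀ (X ω) * R ω) μ := by
        refine aux_integrable (C := 1)
          (((hf.comp hX).mul (hm₀m.comp hX)).mul hR) (fun ω => ?_)
        rw [abs_mul]
        exact mul_le_one₀ (bfm _) (abs_nonneg _)
          (abs_le.2 ⟨by linarith [hR0 ω], hR1 ω⟩)
      have hpR : ∫ ω, f (X ω) * m₀ (X ω) * R ω ∂μ
          = ∫ ω, f (X ω) * m₀ (X ω) * p' (X ω) ∂μ := by
        have := hp_cond' (fun x => f x * m₀ x) (hf.mul hm₀m) 1 one_pos bfm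
        simpa using this
      calc ∫ ω, f (X ω) * m₀ (X ω) * (1 - p' (X ω)) ∂μ
          = ∫ ω, (f (X ω) * m₀ (X ω) - f (X ω) * m₀ (X ω) * p' (X ω)) ∂μ :=
            integral_congr_ae (ae_of_all _ fun ω => by ring)
        _ = (∫ ω, f (X ω) * m₀ (X ω) ∂μ) - ∫ ω, f (X ω) * m₀ (X ω) * p' (X ω) ∂μ :=
            integral_sub i1 i2
        _ = (∫ ω, f (X ω) * m₀ (X ω) ∂μ) - ∫ ω, f (X ω) * m₀ (X ω) * R ω ∂μ := by
            rw [hpR]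
        _ = ∫ ω, (f (X ω) * m₀ (X ω) - f (X ω) * m₀ (X ω) * R ω) ∂μ :=
            (integral_sub i1 i3).symm
        _ = ∫ ω, f (X ω) * ((1 - R ω) * m₀ (X ω)) ∂μ :=
            integral_congr_ae (ae_of_all _ fun ω => by ring)
        _ = ∫ ω, f (X ω) * ((1 - R ω) * Z ω) ∂μ := (HZ1 f hf hf1).symm
    have t_other : Tendsto (fun n : ℕ => ∫ ω, f (X ω) * qn n (X ω) * (R ω * Z ω) ∂μ)
        atTop (𝓝 (∫ ω, f (X ω) * ((1 - R ω) * Z ω) ∂μ)) := by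
      have e : (fun n : ℕ => ∫ ω, f (X ω) * qn n (X ω) * (R ω * Z ω) ∂μ)
          = fun n : ℕ => ∫ ω, f (X ω) * m₀ (X ω) * (qn n (X ω) * p' (X ω)) ∂μ :=
        funext key1
      rw [e, ← key3]
      exact key2
    have t5 : Tendsto (fun n : ℕ => ∫ ω, f (X ω) * qn n (X ω) * (R ω * Z ω) ∂μ)
        atTop (𝓝 (∫ ω, f (X ω) * (q (X ω) * (R ω * Z ω)) ∂μ)) := by
      refine tendsto_integral_of_dominated_convergence
        (bound := fun ω => q (X ω) * R ω) ?_ hqRint ?_ ?_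
      · intro n
        exact (((hf.comp hX).mul ((hqnm n).comp hX)).mul (hR.mul hZm)).aestronglyMeasurable
      · intro n
        refine ae_of_all _ fun ω => ?_
        simp only [Real.norm_eq_abs]
        rw [abs_mul, abs_mul, abs_of_nonneg (hqn0 n _),
          abs_of_nonneg (mul_nonneg (hR0 ω) (hZ0 ω))]
        calc |f (X ω)| * qn n (X ω) * (R ω * Z ω)
            ≤ 1 * qn n (X ω) * (R ω * Z ω) := by
              refine mul_le_mul_of_nonneg_right
                (mul_le_mul_of_nonneg_right (hf1 _) (hqn0 n _))
                (mul_nonneg (hR0 ω) (hZ0 ω))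
          _ = qn n (X ω) * (R ω * Z ω) := by ring
          _ ≤ q (X ω) * (R ω * Z ω) :=
              mul_le_mul_of_nonneg_right (hqnq n _) (mul_nonneg (hR0 ω) (hZ0 ω))
          _ ≤ q (X ω) * (R ω * 1) := by
              refine mul_le_mul_of_nonneg_left ?_ (hq0 _)
              exact mul_le_mul_of_nonneg_left (hZ1 ω) (hR0 ω)
          _ = q (X ω) * R ω := by ring
      · refine ae_of_all _ fun ω => ?_
        have := ((hqntend (X ω)).const_mul (f (X ω))).mul_const (R ω * Z ω)
        simpa [mul_assoc] using this
    exact tendsto_nhds_unique t_other t5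
  have intqRZ : ∀ (Z : Ω → ℝ), Measurable Z → (∀ ω, 0 ≤ Z ω) → (∀ ω, Z ω ≤ 1) →
      ∀ (f : 𝓧 → ℝ), Measurable f → (∀ x, |f x| ≤ 1) →
      Integrable (fun ω => f (X ω) * (q (X ω) * (R ω * Z ω))) μ := by
    intro Z hZm hZ0 hZ1 f hf hf1
    refine Integrable.mono' hqRint
      ((hf.comp hX).mul ((hqm.comp hX).mul (hR.mul hZm))).aestronglyMeasurable
      (ae_of_all _ fun ω => ?_)
    simp only [Real.norm_eq_abs]
    rw [abs_mul, abs_of_nonneg (mul_nonneg (hq0 _) (mul_nonneg (hR0 ω) (hZ0 ω)))]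
    calc |f (X ω)| * (q (X ω) * (R ω * Z ω)) ≤ 1 * (q (X ω) * (R ω * Z ω)) :=
          mul_le_mul_of_nonneg_right (hf1 _)
            (mul_nonneg (hq0 _) (mul_nonneg (hR0 ω) (hZ0 ω)))
      _ = q (X ω) * (R ω * Z ω) := one_mul _
      _ ≤ q (X ω) * (R ω * 1) := by
          refine mul_le_mul_of_nonneg_left ?_ (hq0 _)
          exact mul_le_mul_of_nonneg_left (hZ1 ω) (hR0 ω)
      _ = q (X ω) * R ω := by ring
  have F_B : ∀ f : 𝓧 → ℝ, Measurable f → (∀ x, |f x| ≤ 1) →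
      ∫ ω, f (X ω) * ((1 - R ω) * Y ω) ∂μ
        = ∫ ω, f (X ω) * (q (X ω) * (R ω * Y ω)) ∂μ :=
    core Y m' hY hY0 hY1 hm'm hm'0 hm'1 hm_cond'
      (fun f hf hf1 => hexch' f hf 1 one_pos hf1)
  have F_A : ∀ f : 𝓧 → ℝ, Measurable f → (∀ x, |f x| ≤ 1) →
      ∫ ω, f (X ω) * ((1 - R ω) * 1) ∂μ
        = ∫ ω, f (X ω) * (q (X ω) * (R ω * 1)) ∂μ :=
    core (fun _ => 1) (fun _ => 1) measurable_const (fun _ => zero_le_one)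
      (fun _ => le_refl 1) measurable_const (fun _ => zero_le_one) (fun _ => le_refl 1)
      (fun f hf C hC hfC => rfl) (fun f hf hf1 => rfl)
  have F_C : ∀ f : 𝓧 → ℝ, Measurable f → (∀ x, |f x| ≤ 1) →
      ∫ ω, f (X ω) * ((1 - R ω) * (1 - Y ω)) ∂μ
        = ∫ ω, f (X ω) * (q (X ω) * (R ω * (1 - Y ω))) ∂μ := by
    intro f hf hf1
    have iL1 : Integrable (fun ω => f (X ω) * ((1 - R ω) * 1)) μ := by
      refine aux_integrable (C := 1) ((hf.comp hX).mul
        ((measurable_const.sub hR).mul measurable_const)) (fun ω => ?_)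
      rw [abs_mul]
      exact mul_le_one₀ (hf1 _) (abs_nonneg _)
        (by rw [mul_one]; exact abs_le.2 ⟨by linarith [hR1 ω], by linarith [hR0 ω]⟩)
    have iLY : Integrable (fun ω => f (X ω) * ((1 - R ω) * Y ω)) μ := by
      refine aux_integrable (C := 1) ((hf.comp hX).mul
        ((measurable_const.sub hR).mul hY)) (fun ω => ?_)
      rw [abs_mul]
      refine mul_le_one₀ (hf1 _) (abs_nonneg _) ?_
      rw [abs_mul]
      exact mul_le_one₀ (abs_le.2 ⟨by linarith [hR1 ω], by linarith [hR0 ω]⟩)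
        (abs_nonneg _) (abs_le.2 ⟨by linarith [hY0 ω], hY1 ω⟩)
    have iR1 : Integrable (fun ω => f (X ω) * (q (X ω) * (R ω * 1))) μ :=
      intqRZ (fun _ => 1) measurable_const (fun _ => zero_le_one) (fun _ => le_refl 1)
        f hf hf1
    have iRY : Integrable (fun ω => f (X ω) * (q (X ω) * (R ω * Y ω))) μ :=
      intqRZ Y hY hY0 hY1 f hf hf1
    calc ∫ ω, f (X ω) * ((1 - R ω) * (1 - Y ω)) ∂μ
        = ∫ ω, (f (X ω) * ((1 - R ω) * 1) - f (X ω) * ((1 - R ω) * Y ω)) ∂μ :=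
          integral_congr_ae (ae_of_all _ fun ω => by ring)
      _ = (∫ ω, f (X ω) * ((1 - R ω) * 1) ∂μ) - ∫ ω, f (X ω) * ((1 - R ω) * Y ω) ∂μ :=
          integral_sub iL1 iLY
      _ = (∫ ω, f (X ω) * (q (X ω) * (R ω * 1)) ∂μ)
            - ∫ ω, f (X ω) * (q (X ω) * (R ω * Y ω)) ∂μ := by
          rw [F_A f hf hf1, F_B f hf hf1]
      _ = ∫ ω, (f (X ω) * (q (X ω) * (R ω * 1)) - f (X ω) * (q (X ω) * (R ω * Y ω))) ∂μ :=
          (integral_sub iR1 iRY).symm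
      _ = ∫ ω, f (X ω) * (q (X ω) * (R ω * (1 - Y ω))) ∂μ :=
          integral_congr_ae (ae_of_all _ fun ω => by ring)
  -- main double-integral identity
  have main : ∀ (κ : 𝓧 → 𝓧 → ℝ), Measurable (Function.uncurry κ) →
      (∀ x x', 0 ≤ κ x x') → (∀ x x', κ x x' ≤ 1) →
      (∫ ω, ∫ ω', (1 - R ω) * (1 - R ω') * Y ω * (1 - Y ω') * κ (X ω) (X ω') ∂μ ∂μ)
        = ∫ ω, ∫ ω', q (X ω) * q (X ω') * Y ω * (1 - Y ω') * R ω * R ω'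
            * κ (X ω) (X ω') ∂μ ∂μ := by
    intro κ hκ κ0 κ1
    set G : 𝓧 → ℝ :=
      fun x => ∫ ω', κ x (X ω') * (q (X ω') * (R ω' * (1 - Y ω'))) ∂μ with hGdef
    have hκb : ∀ x, ∀ x', |κ x x'| ≤ 1 := fun x x' =>
      abs_le.2 ⟨by linarith [κ0 x x'], κ1 x x'⟩
    have hκx : ∀ x, Measurable (fun x' => κ x x') := fun x =>
      hκ.comp measurable_prodMk_left
    have hGmeas : Measurable G := by
      have hkprod : Measurable fun z : 𝓧 × Ω =>
          κ z.1 (X z.2) * (q (X z.2) * (R z.2 * (1 - Y z.2))) :=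
        (hκ.comp (measurable_fst.prodMk (hX.comp measurable_snd))).mul
          (((hqm.comp hX).comp measurable_snd).mul ((hR.comp measurable_snd).mul
            (measurable_const.sub (hY.comp measurable_snd))))
      exact hkprod.stronglyMeasurable.integral_prod_right'.measurable
    have hGint : ∀ x, Integrable
        (fun ω' => κ x (X ω') * (q (X ω') * (R ω' * (1 - Y ω')))) μ := fun x =>
      intqRZ (fun ω' => 1 - Y ω') (measurable_const.sub hY)
        (fun ω => show (0:ℝ) ≤ 1 - Y ω by linarith [hY1 ω])
        (fun ω => show 1 - Y ω ≤ (1:ℝ) by linarith [hY0 ω])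
        (fun x' => κ x x') (hκx x) (hκb x)
    have hG0 : ∀ x, 0 ≤ G x := fun x =>
      integral_nonneg fun ω' => mul_nonneg (κ0 _ _) (mul_nonneg (hq0 _)
        (mul_nonneg (hR0 _) (by linarith [hY1 ω'])))
    have hG1 : ∀ x, G x ≤ 1 := by
      intro x
      calc G x ≤ ∫ ω', q (X ω') * R ω' ∂μ := by
            refine integral_mono (hGint x) hqRint (fun ω' => ?_)
            calc κ x (X ω') * (q (X ω') * (R ω' * (1 - Y ω')))
                ≤ 1 * (q (X ω') * (R ω' * (1 - Y ω'))) :=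
                  mul_le_mul_of_nonneg_right (κ1 _ _) (mul_nonneg (hq0 _)
                    (mul_nonneg (hR0 _) (by linarith [hY1 ω'])))
              _ = q (X ω') * (R ω' * (1 - Y ω')) := one_mul _
              _ ≤ q (X ω') * (R ω' * 1) := by
                  refine mul_le_mul_of_nonneg_left ?_ (hq0 _)
                  exact mul_le_mul_of_nonneg_left (by linarith [hY0 ω']) (hR0 ω')
              _ = q (X ω') * R ω' := by ring
        _ ≤ 1 := hqRle
    have hGb : ∀ x, |G x| ≤ 1 := fun x => abs_le.2 ⟨by linarith [hG0 x], hG1 x⟩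
    have innerL : ∀ ω, (∫ ω', (1 - R ω) * (1 - R ω') * Y ω * (1 - Y ω')
        * κ (X ω) (X ω') ∂μ) = ((1 - R ω) * Y ω) * G (X ω) := by
      intro ω
      have e1 : (∫ ω', (1 - R ω) * (1 - R ω') * Y ω * (1 - Y ω') * κ (X ω) (X ω') ∂μ)
          = ((1 - R ω) * Y ω)
            * ∫ ω', (fun x' => κ (X ω) x') (X ω') * ((1 - R ω') * (1 - Y ω')) ∂μ := by
        rw [← integral_const_mul]
        exact integral_congr_ae (ae_of_all _ fun ω' => by simp only []; ring)
      rw [e1, F_C _ (hκx (X ω)) (hκb (X ω))]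
    have innerR : ∀ ω, (q (X ω) * (R ω * Y ω)) * G (X ω)
        = ∫ ω', q (X ω) * q (X ω') * Y ω * (1 - Y ω') * R ω * R ω'
            * κ (X ω) (X ω') ∂μ := by
      intro ω
      rw [hGdef]
      simp only []
      rw [← integral_const_mul]
      exact integral_congr_ae (ae_of_all _ fun ω' => by ring)
    calc (∫ ω, ∫ ω', (1 - R ω) * (1 - R ω') * Y ω * (1 - Y ω') * κ (X ω) (X ω') ∂μ ∂μ)
        = ∫ ω, ((1 - R ω) * Y ω) * G (X ω) ∂μ :=
          integral_congr_ae (ae_of_all _ innerL)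
      _ = ∫ ω, G (X ω) * ((1 - R ω) * Y ω) ∂μ :=
          integral_congr_ae (ae_of_all _ fun ω => by ring)
      _ = ∫ ω, G (X ω) * (q (X ω) * (R ω * Y ω)) ∂μ := F_B G hGmeas hGb
      _ = ∫ ω, (q (X ω) * (R ω * Y ω)) * G (X ω) ∂μ :=
          integral_congr_ae (ae_of_all _ fun ω => by ring)
      _ = ∫ ω, ∫ ω', q (X ω) * q (X ω') * Y ω * (1 - Y ω') * R ω * R ω'
            * κ (X ω) (X ω') ∂μ ∂μ :=
          integral_congr_ae (ae_of_all _ innerR)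
  clear hden
  have Hnum := main k hk hk0 hk1
  have Hden : (∫ ω, ∫ ω', (1 - R ω) * (1 - R ω') * Y ω * (1 - Y ω') ∂μ ∂μ)
      = ∫ ω, ∫ ω', q (X ω) * q (X ω') * Y ω * (1 - Y ω') * R ω * R ω' ∂μ ∂μ := by
    have h := main (fun _ _ => 1) measurable_const (fun _ _ => zero_le_one)
      (fun _ _ => le_refl 1)
    simpa using h
  have hq_ae : ∀ᵐ ω ∂μ, q (X ω) = (1 - p (X ω)) / p (X ω) := by
    filter_upwards [hpp'] with ω h
    rw [hqdef]
    simp only []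
    rw [h]
  have convN : (∫ ω, ∫ ω', q (X ω) * q (X ω') * Y ω * (1 - Y ω') * R ω * R ω'
        * k (X ω) (X ω') ∂μ ∂μ)
      = ∫ ω, ∫ ω', ((1 - p (X ω)) / p (X ω)) * ((1 - p (X ω')) / p (X ω'))
          * Y ω * (1 - Y ω') * R ω * R ω' * k (X ω) (X ω') ∂μ ∂μ := by
    refine integral_congr_ae ?_
    filter_upwards [hq_ae] with ω hω
    refine integral_congr_ae ?_
    filter_upwards [hq_ae] with ω' hω'
    rw [hω, hω']
  have convD : (∫ ω, ∫ ω', q (X ω) * q (X ω') * Y ω * (1 - Y ω') * R ω * R ω' ∂μ ∂μ)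
      = ∫ ω, ∫ ω', ((1 - p (X ω)) / p (X ω)) * ((1 - p (X ω')) / p (X ω'))
          * Y ω * (1 - Y ω') * R ω * R ω' ∂μ ∂μ := by
    refine integral_congr_ae ?_
    filter_upwards [hq_ae] with ω hω
    refine integral_congr_ae ?_
    filter_upwards [hq_ae] with ω' hω'
    rw [hω, hω']
  rw [Hnum, convN, Hden, convD]
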